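/- With Δ_BC = ∏_i (z_i − z_i^{−1}) ∏_{i<j} (z_i^{−1} − z_j − z_j^{−1} + z_i), the product K_λ^{(n)}·Δ_BC equals (1/v_λ) ∑_{w∈B_n} ε(w) w(∏_i u'_λ(z_i) ∏_{i<j} (1−t z_i^{−1}z_j^{−1})(z_i − t z_j)), where u'_λ(z_i) = z_i(1−az_i^{−1})(1−bz_i^{−1}) if λ_i = 0 and u'_λ(z_i) = z_i^{λ_i+1}(1−t₀z_i^{−1})⋯(1−t₃z_i^{−1}) if λ_i > 0. -/

import Mathlib

open Finset

/-- `lam` is a partition: weakly decreasing with nonnegative entries. -/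
def isPartition {n : ℕ} (lam : Fin n → ℤ) : Prop :=
  (∀ i, 0 ≤ lam i) ∧ ∀ i j : Fin n, i ≤ j → lam j ≤ lam i

/-- Action of an element `(σ, ε)` of the hyperoctahedral group `B_n` on a point
`z ∈ (ℂ*)ⁿ`: permute the variables by `σ` and invert those with `ε i = true`. -/
noncomputable def bnAct {n : ℕ} (σ : Equiv.Perm (Fin n)) (ε : Fin n → Bool)
    (z : Fin n → ℂ) : Fin n → ℂ :=
  fun i => if ε i then (z (σ i))⁻¹ else z (σ i)

/-- The univariate factor `u_λ(z_i)` of the `q = 0` Koornwinder kernel. -/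
noncomputable def uLam (l : ℤ) (a b t0 t1 t2 t3 : ℂ) (x : ℂ) : ℂ :=
  if l = 0 then (1 - a * x⁻¹) * (1 - b * x⁻¹) / (1 - x⁻¹ ^ 2)
  else x ^ l * ((1 - t0 * x⁻¹) * (1 - t1 * x⁻¹) * (1 - t2 * x⁻¹) * (1 - t3 * x⁻¹)) /
    (1 - x⁻¹ ^ 2)

/-- The base term `∏_i u_λ(z_i) ∏_{i<j} (1−tz_i⁻¹z_j)(1−tz_i⁻¹z_j⁻¹)/[(1−z_i⁻¹z_j)(1−z_i⁻¹z_j⁻¹)]`. -/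
noncomputable def Rbase {n : ℕ} (lam : Fin n → ℤ) (t a b t0 t1 t2 t3 : ℂ)
    (y : Fin n → ℂ) : ℂ :=
  (∏ i : Fin n, uLam (lam i) a b t0 t1 t2 t3 (y i)) *
  ∏ i : Fin n, ∏ j : Fin n,
    if i < j then
      ((1 - t * (y i)⁻¹ * y j) * (1 - t * (y i)⁻¹ * (y j)⁻¹)) /
        ((1 - (y i)⁻¹ * y j) * (1 - (y i)⁻¹ * (y j)⁻¹))
    else 1

/-- The normalization constant `v_λ(t;a,b;t₀,…,t₃)`. -/
noncomputable def vlam {n : ℕ} (lam : Fin n → ℤ) (t a b t0 t1 t2 t3 : ℂ) : ℂ :=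
  (∏ p : Fin n,
      (1 - t ^ (Finset.univ.filter fun q : Fin n => lam q = lam p ∧ q ≤ p).card) / (1 - t)) *
  (∏ i ∈ Finset.range ((Finset.univ.filter fun q : Fin n => lam q = 1).card),
      (1 - t0 * t1 * t2 * t3 *
        t ^ (i + 2 * (Finset.univ.filter fun q : Fin n => lam q = 0).card))) *
  ∏ i ∈ Finset.range ((Finset.univ.filter fun q : Fin n => lam q = 0).card),
      (1 - a * b * t ^ i)

/-- The `q = 0` symmetric Koornwinder polynomial `K_λ^{(n)}(z;t;a,b;t₀,…,t₃)`,
defined as `v_λ⁻¹` times the sum over the hyperoctahedral group `B_n`. -/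
noncomputable def Kpoly {n : ℕ} (lam : Fin n → ℤ) (t a b t0 t1 t2 t3 : ℂ)
    (z : Fin n → ℂ) : ℂ :=
  (vlam lam t a b t0 t1 t2 t3)⁻¹ *
    ∑ σ : Equiv.Perm (Fin n), ∑ ε : Fin n → Bool,
      Rbase lam t a b t0 t1 t2 t3 (bnAct σ ε z)

/-- Genericity condition on `z`: all the denominators appearing in the terms of
`K_λ^{(n)}` are nonzero (for every element of `B_n`). -/
def genericZ {n : ℕ} (z : Fin n → ℂ) : Prop :=
  (∀ i, z i ≠ 0 ∧ z i ^ 2 ≠ 1) ∧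
    ∀ i j : Fin n, i ≠ j → z i * z j ≠ 1 ∧ z i ≠ z j

/-- The fully `BC_n`-antisymmetric Laurent polynomial
`Δ_BC = ∏_i (z_i − z_i⁻¹) ∏_{i<j} (z_i⁻¹ − z_j − z_j⁻¹ + z_i)`. -/
noncomputable def deltaBC {n : ℕ} (z : Fin n → ℂ) : ℂ :=
  (∏ i : Fin n, (z i - (z i)⁻¹)) *
  ∏ i : Fin n, ∏ j : Fin n,
    if i < j then (z i)⁻¹ - z j - (z j)⁻¹ + z i else 1

/-- The modified univariate factor `u'_λ(z_i)`. -/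
noncomputable def uLam' (l : ℤ) (a b t0 t1 t2 t3 : ℂ) (x : ℂ) : ℂ :=
  if l = 0 then x * (1 - a * x⁻¹) * (1 - b * x⁻¹)
  else x ^ (l + 1) * ((1 - t0 * x⁻¹) * (1 - t1 * x⁻¹) * (1 - t2 * x⁻¹) * (1 - t3 * x⁻¹))

/-- The modified base term `∏_i u'_λ(z_i) ∏_{i<j} (1−tz_i⁻¹z_j⁻¹)(z_i−tz_j)`. -/
noncomputable def Rbase' {n : ℕ} (lam : Fin n → ℤ) (t a b t0 t1 t2 t3 : ℂ)
    (y : Fin n → ℂ) : ℂ :=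
  (∏ i : Fin n, uLam' (lam i) a b t0 t1 t2 t3 (y i)) *
  ∏ i : Fin n, ∏ j : Fin n,
    if i < j then (1 - t * (y i)⁻¹ * (y j)⁻¹) * (y i - t * y j) else 1


section Aux

lemma prod_ite_lt_eq_Ioi {n : ℕ} (f : Fin n → Fin n → ℂ) :
    (∏ i : Fin n, ∏ j : Fin n, if i < j then f i j else 1)
      = ∏ i : Fin n, ∏ j ∈ Finset.Ioi i, f i j := by
  refine Finset.prod_congr rfl fun i _ => ?_
  rw [← Finset.prod_filter]
  congr 1
  ext j
  simp

lemma vdm_sign {n : ℕ} (σ : Equiv.Perm (Fin n)) (d : Fin n → ℂ) :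
    (∏ i : Fin n, ∏ j : Fin n, if i < j then d (σ i) - d (σ j) else 1)
      = ((Equiv.Perm.sign σ : ℤ) : ℂ) *
        ∏ i : Fin n, ∏ j : Fin n, if i < j then d i - d j else 1 := by
  have key : (∏ i : Fin n, ∏ j ∈ Finset.Ioi i, (d (σ j) - d (σ i)))
      = ((Equiv.Perm.sign σ : ℤ) : ℂ) * ∏ i : Fin n, ∏ j ∈ Finset.Ioi i, (d j - d i) := by
    have h1 : Matrix.vandermonde (fun i => d (σ i)) = (Matrix.vandermonde d).submatrix σ id := by
      ext i j
      rfl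
    have h2 := Matrix.det_vandermonde (fun i => d (σ i))
    rw [h1, Matrix.det_permute, Matrix.det_vandermonde] at h2
    rw [← h2]
  rw [prod_ite_lt_eq_Ioi, prod_ite_lt_eq_Ioi]
  have flip : ∀ e : Fin n → ℂ,
      (∏ i : Fin n, ∏ j ∈ Finset.Ioi i, (e i - e j))
        = (∏ i : Fin n, ∏ j ∈ Finset.Ioi i, (-1 : ℂ)) *
          ∏ i : Fin n, ∏ j ∈ Finset.Ioi i, (e j - e i) := by
    intro e
    rw [← Finset.prod_mul_distrib]
    refine Finset.prod_congr rfl fun i _ => ?_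
    rw [← Finset.prod_mul_distrib]
    refine Finset.prod_congr rfl fun j _ => ?_
    ring
  rw [flip (fun i => d (σ i)), flip d, key]
  ring

lemma deltaBC_bnAct {n : ℕ} (σ : Equiv.Perm (Fin n)) (ε : Fin n → Bool) (z : Fin n → ℂ) :
    deltaBC (bnAct σ ε z)
      = ((Equiv.Perm.sign σ : ℤ) : ℂ) * (∏ i : Fin n, if ε i then (-1 : ℂ) else 1) *
        deltaBC z := by
  have hy : ∀ i, bnAct σ ε z i = if ε i then (z (σ i))⁻¹ else z (σ i) := fun i => rfl
  have h1 : (∏ i : Fin n, (bnAct σ ε z i - (bnAct σ ε z i)⁻¹))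
      = (∏ i : Fin n, if ε i then (-1 : ℂ) else 1) * ∏ i : Fin n, (z i - (z i)⁻¹) := by
    have e : (∏ i : Fin n, (bnAct σ ε z i - (bnAct σ ε z i)⁻¹))
        = ∏ i : Fin n, ((if ε i then (-1 : ℂ) else 1) * (z (σ i) - (z (σ i))⁻¹)) := by
      refine Finset.prod_congr rfl fun i _ => ?_
      rw [hy]
      by_cases hε : ε i = true <;> simp [hε, inv_inv]
    rw [e, Finset.prod_mul_distrib, Equiv.prod_comp σ (fun k => z k - (z k)⁻¹)]
  have h2 : (∏ i : Fin n, ∏ j : Fin n,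
        if i < j then (bnAct σ ε z i)⁻¹ - bnAct σ ε z j - (bnAct σ ε z j)⁻¹ + bnAct σ ε z i
        else 1)
      = ((Equiv.Perm.sign σ : ℤ) : ℂ) *
        ∏ i : Fin n, ∏ j : Fin n, if i < j then (z i)⁻¹ - z j - (z j)⁻¹ + z i else 1 := by
    have e1 : (∏ i : Fin n, ∏ j : Fin n,
          if i < j then (bnAct σ ε z i)⁻¹ - bnAct σ ε z j - (bnAct σ ε z j)⁻¹ + bnAct σ ε z i
          else 1)
        = ∏ i : Fin n, ∏ j : Fin n,
            if i < j then (fun k => z k + (z k)⁻¹) (σ i) - (fun k => z k + (z k)⁻¹) (σ j)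
            else 1 := by
      refine Finset.prod_congr rfl fun i _ => Finset.prod_congr rfl fun j _ => ?_
      split
      · rw [hy, hy]
        by_cases hεi : ε i = true <;> by_cases hεj : ε j = true <;>
          simp [hεi, hεj, inv_inv] <;> ring
      · rfl
    have e2 : (∏ i : Fin n, ∏ j : Fin n, if i < j then (z i)⁻¹ - z j - (z j)⁻¹ + z i else 1)
        = ∏ i : Fin n, ∏ j : Fin n,
            if i < j then (fun k => z k + (z k)⁻¹) i - (fun k => z k + (z k)⁻¹) j else 1 := by
      refine Finset.prod_congr rfl fun i _ => Finset.prod_congr rfl fun j _ => ?_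
      split
      · ring
      · rfl
    rw [e1, e2, vdm_sign σ (fun k => z k + (z k)⁻¹)]
  unfold deltaBC
  rw [h1, h2]
  ring

lemma genericZ_bnAct {n : ℕ} (σ : Equiv.Perm (Fin n)) (ε : Fin n → Bool) (z : Fin n → ℂ)
    (hz : genericZ z) : genericZ (bnAct σ ε z) := by
  obtain ⟨h1, h2⟩ := hz
  have hw : ∀ i, bnAct σ ε z i = if ε i = true then (z (σ i))⁻¹ else z (σ i) := fun i => rfl
  have sq : ∀ x : ℂ, x ^ 2 ≠ 1 → (x⁻¹) ^ 2 ≠ 1 := by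
    intro x hx h
    apply hx
    rw [inv_pow] at h
    rw [← inv_inv (x ^ 2), h, inv_one]
  constructor
  · intro i
    by_cases hε : ε i = true
    · rw [hw, if_pos hε]
      exact ⟨inv_ne_zero (h1 (σ i)).1, sq _ (h1 (σ i)).2⟩
    · rw [hw, if_neg hε]
      exact h1 (σ i)
  · intro i j hij
    have hsij : σ i ≠ σ j := fun h => hij (σ.injective h)
    obtain ⟨hz0i, -⟩ := h1 (σ i)
    obtain ⟨hz0j, -⟩ := h1 (σ j)
    obtain ⟨hm, hne⟩ := h2 (σ i) (σ j) hsij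
    by_cases hεi : ε i = true <;> by_cases hεj : ε j = true <;>
      rw [hw i, hw j] <;>
      [rw [if_pos hεi, if_pos hεj]; rw [if_pos hεi, if_neg hεj];
       rw [if_neg hεi, if_pos hεj]; rw [if_neg hεi, if_neg hεj]]
    · refine ⟨fun h => hm ?_, fun h => hne (inv_injective h)⟩
      rw [← mul_inv] at h
      rw [← inv_inv (z (σ i) * z (σ j)), h, inv_one]
    · refine ⟨fun h => hne ((inv_mul_eq_one₀ hz0i).mp h), fun h => hm ?_⟩
      rw [← h, mul_inv_cancel₀ hz0i]
    · refine ⟨fun h => hne ((mul_inv_eq_one₀ hz0j).mp h), fun h => hm ?_⟩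
      rw [h, inv_mul_cancel₀ hz0j]
    · exact ⟨hm, hne⟩

lemma uLam_mul (l : ℤ) (a b t0 t1 t2 t3 x : ℂ) (hx : x ≠ 0) (hx2 : x ^ 2 ≠ 1) :
    uLam l a b t0 t1 t2 t3 x * (x - x⁻¹) = uLam' l a b t0 t1 t2 t3 x := by
  have hd : (1 : ℂ) - x⁻¹ ^ 2 ≠ 0 := by
    rw [sub_ne_zero]
    intro h
    apply hx2
    rw [inv_pow] at h
    rw [← inv_inv (x ^ 2), ← h, inv_one]
  have key : x - x⁻¹ = x * (1 - x⁻¹ ^ 2) := by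
    field_simp
  unfold uLam uLam'
  split_ifs with h
  · rw [key]
    have step : (1 - a * x⁻¹) * (1 - b * x⁻¹) / (1 - x⁻¹ ^ 2) * (x * (1 - x⁻¹ ^ 2))
        = (1 - a * x⁻¹) * (1 - b * x⁻¹) / (1 - x⁻¹ ^ 2) * (1 - x⁻¹ ^ 2) * x := by ring
    rw [step, div_mul_cancel₀ _ hd]
    ring
  · rw [key, zpow_add_one₀ hx]
    have step : x ^ l * ((1 - t0 * x⁻¹) * (1 - t1 * x⁻¹) * (1 - t2 * x⁻¹) * (1 - t3 * x⁻¹)) /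
          (1 - x⁻¹ ^ 2) * (x * (1 - x⁻¹ ^ 2))
        = x ^ l * ((1 - t0 * x⁻¹) * (1 - t1 * x⁻¹) * (1 - t2 * x⁻¹) * (1 - t3 * x⁻¹)) /
          (1 - x⁻¹ ^ 2) * (1 - x⁻¹ ^ 2) * x := by ring
    rw [step, div_mul_cancel₀ _ hd]
    ring

lemma pair_mul (t u v : ℂ) (hu : u ≠ 0) (hv : v ≠ 0) (hne : u ≠ v) (h1 : u * v ≠ 1) :
    ((1 - t * u⁻¹ * v) * (1 - t * u⁻¹ * v⁻¹)) / ((1 - u⁻¹ * v) * (1 - u⁻¹ * v⁻¹)) *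
      (u⁻¹ - v - v⁻¹ + u) = (1 - t * u⁻¹ * v⁻¹) * (u - t * v) := by
  have d1 : (1 : ℂ) - u⁻¹ * v ≠ 0 := by
    rw [sub_ne_zero]
    intro h
    exact hne ((inv_mul_eq_one₀ hu).mp h.symm)
  have d2 : (1 : ℂ) - u⁻¹ * v⁻¹ ≠ 0 := by
    rw [sub_ne_zero]
    intro h
    apply h1
    have h' : u * (u⁻¹ * v⁻¹) * v = u * 1 * v := by rw [← h]
    rw [mul_one] at h'
    field_simp at h'
    linear_combination -h'
  have key : (u⁻¹ - v - v⁻¹ + u) = u * ((1 - u⁻¹ * v) * (1 - u⁻¹ * v⁻¹)) := by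
    field_simp
    ring
  rw [key]
  have step : ((1 - t * u⁻¹ * v) * (1 - t * u⁻¹ * v⁻¹)) / ((1 - u⁻¹ * v) * (1 - u⁻¹ * v⁻¹)) *
      (u * ((1 - u⁻¹ * v) * (1 - u⁻¹ * v⁻¹)))
      = ((1 - t * u⁻¹ * v) * (1 - t * u⁻¹ * v⁻¹)) / ((1 - u⁻¹ * v) * (1 - u⁻¹ * v⁻¹)) *
        ((1 - u⁻¹ * v) * (1 - u⁻¹ * v⁻¹)) * u := by ring
  rw [step, div_mul_cancel₀ _ (mul_ne_zero d1 d2)]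
  field_simp

lemma Rbase_mul_deltaBC {n : ℕ} (lam : Fin n → ℤ) (t a b t0 t1 t2 t3 : ℂ)
    (y : Fin n → ℂ) (hy : genericZ y) :
    Rbase lam t a b t0 t1 t2 t3 y * deltaBC y = Rbase' lam t a b t0 t1 t2 t3 y := by
  obtain ⟨h1, h2⟩ := hy
  unfold Rbase deltaBC Rbase'
  rw [mul_mul_mul_comm]
  congr 1
  · rw [← Finset.prod_mul_distrib]
    exact Finset.prod_congr rfl fun i _ =>
      uLam_mul (lam i) a b t0 t1 t2 t3 (y i) (h1 i).1 (h1 i).2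
  · rw [← Finset.prod_mul_distrib]
    refine Finset.prod_congr rfl fun i _ => ?_
    rw [← Finset.prod_mul_distrib]
    refine Finset.prod_congr rfl fun j _ => ?_
    by_cases hij : i < j
    · simp only [if_pos hij]
      exact pair_mul t (y i) (y j) (h1 i).1 (h1 j).1 (h2 i j (ne_of_lt hij)).2
        (h2 i j (ne_of_lt hij)).1
    · simp [hij]

end Aux

/-- The product `K_λ^{(n)}·Δ_BC` equals
`v_λ⁻¹ ∑_{w∈B_n} ε(w) w(∏_i u'_λ(z_i) ∏_{i<j} (1−tz_i⁻¹z_j⁻¹)(z_i−tz_j))`. -/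
theorem K_mul_deltaBC (n : ℕ) (lam : Fin n → ℤ) (hlam : isPartition lam)
    (t a b t0 t1 t2 t3 : ℂ) (hv : vlam lam t a b t0 t1 t2 t3 ≠ 0) :
    ∀ z : Fin n → ℂ, genericZ z →
      Kpoly lam t a b t0 t1 t2 t3 z * deltaBC z
      = (vlam lam t a b t0 t1 t2 t3)⁻¹ *
          ∑ σ : Equiv.Perm (Fin n), ∑ ε : Fin n → Bool,
            ((Equiv.Perm.sign σ : ℤ) : ℂ) * (∏ i : Fin n, if ε i then (-1 : ℂ) else 1) *
              Rbase' lam t a b t0 t1 t2 t3 (bnAct σ ε z) := by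
  intro z hz
  unfold Kpoly
  rw [mul_assoc]
  congr 1
  rw [Finset.sum_mul]
  refine Finset.sum_congr rfl fun σ _ => ?_
  rw [Finset.sum_mul]
  refine Finset.sum_congr rfl fun ε _ => ?_
  have hgen := genericZ_bnAct σ ε z hz
  have hdel := deltaBC_bnAct σ ε z
  have hs : (((Equiv.Perm.sign σ : ℤ) : ℂ) * (∏ i : Fin n, if ε i then (-1 : ℂ) else 1)) *
      (((Equiv.Perm.sign σ : ℤ) : ℂ) * (∏ i : Fin n, if ε i then (-1 : ℂ) else 1)) = 1 := by
    have hσ : ((Equiv.Perm.sign σ : ℤ) : ℂ) * ((Equiv.Perm.sign σ : ℤ) : ℂ) = 1 := by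
      rcases Int.units_eq_one_or (Equiv.Perm.sign σ) with h | h <;> rw [h] <;> norm_num
    have hε : (∏ i : Fin n, if ε i then (-1 : ℂ) else 1) *
        (∏ i : Fin n, if ε i then (-1 : ℂ) else 1) = 1 := by
      rw [← Finset.prod_mul_distrib]
      refine Finset.prod_eq_one fun i _ => ?_
      cases ε i <;> norm_num
    calc _ = (((Equiv.Perm.sign σ : ℤ) : ℂ) * ((Equiv.Perm.sign σ : ℤ) : ℂ)) *
        ((∏ i : Fin n, if ε i then (-1 : ℂ) else 1) *
          (∏ i : Fin n, if ε i then (-1 : ℂ) else 1)) := by ring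
      _ = 1 := by rw [hσ, hε, one_mul]
  rw [← Rbase_mul_deltaBC lam t a b t0 t1 t2 t3 (bnAct σ ε z) hgen, hdel]
  linear_combination (-(Rbase lam t a b t0 t1 t2 t3 (bnAct σ ε z) * deltaBC z)) * hs
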